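/- arXiv:2501.01923 — 3 statements merged into one kernel-verified Lean document; each statement's English description precedes it below -/
import Mathlib

section
/- Let k : ℝ → ℝ be continuous with k ≥ −K² for some constant K > 0. If w : ℝ → ℝ is a C¹ solution of the Riccati equation w' + w² + k = 0 defined on all of ℝ, then |w(t)| ≤ K for all t ∈ ℝ. -/
/-- Auxiliary: a global solution of the Riccati equation cannot exceed `K` anywhere. -/
lemma riccati_aux (K : ℝ) (hK : 0 < K) (k : ℝ → ℝ) (hbound : ∀ t, -K ^ 2 ≤ k t)
    (w : ℝ → ℝ) (hw : Differentiable ℝ w)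
    (hric : ∀ t, deriv w t + w t ^ 2 + k t = 0)
    (t₀ : ℝ) (h : K < w t₀) : False := by
  set c := w t₀ with hc_def
  have hcK : K < c := h
  have hcpos : 0 < c := hK.trans hcK
  have hK2c2 : K ^ 2 < c ^ 2 := by nlinarith
  -- Step A: w stays ≥ c backward in time.
  have stepA : ∀ t ≤ t₀, c ≤ w t := by
    intro s hs
    by_contra hws
    push_neg at hws
    have hst : s < t₀ := by
      rcases lt_or_eq_of_le hs with h' | h'
      · exact h'
      · exfalso; rw [h', ← hc_def] at hws; exact lt_irrefl _ hws
    set A := {t ∈ Set.Icc s t₀ | w t = c} with hA_def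
    have hA_ne : A.Nonempty := ⟨t₀, ⟨le_of_lt hst, le_rfl⟩, rfl⟩
    have hA_closed : IsClosed A := by
      apply IsClosed.inter
      · exact isClosed_Icc
      · exact isClosed_eq hw.continuous continuous_const
    have hA_bdd : BddBelow A := ⟨s, fun t ht => ht.1.1⟩
    set a := sInf A with ha_def
    have haA : a ∈ A := hA_closed.csInf_mem hA_ne hA_bdd
    have haw : w a = c := haA.2
    have hsa : s < a := by
      rcases lt_or_eq_of_le haA.1.1 with h' | h'
      · exact h'
      · exfalso; rw [← h'] at haw; exact absurd haw (ne_of_lt hws)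
    -- w < c on [s, a)
    have hbelow : ∀ t, s ≤ t → t < a → w t < c := by
      intro t hts hta
      by_contra hwt
      push_neg at hwt
      rcases lt_or_eq_of_le hwt with h' | h'
      · have : c ∈ Set.Icc (w s) (w t) := ⟨le_of_lt hws, le_of_lt h'⟩
        obtain ⟨r, hr1, hr2⟩ := intermediate_value_Icc hts (hw.continuous.continuousOn) this
        have hrA : r ∈ A := ⟨⟨hr1.1, le_trans hr1.2 (le_trans (le_of_lt hta) haA.1.2)⟩, hr2⟩
        exact absurd (csInf_le hA_bdd hrA) (not_le.mpr (lt_of_le_of_lt hr1.2 hta))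
      · have htA : t ∈ A := ⟨⟨hts, le_trans (le_of_lt hta) haA.1.2⟩, h'.symm⟩
        exact absurd (csInf_le hA_bdd htA) (not_le.mpr hta)
    -- derivative at a is negative
    have hda : deriv w a < 0 := by
      have := hric a
      have hka := hbound a
      rw [haw] at this
      nlinarith
    have hslope : Filter.Tendsto (slope w a) (nhdsWithin a {a}ᶜ) (nhds (deriv w a)) :=
      hasDerivAt_iff_tendsto_slope.mp (hw a).hasDerivAt
    have hev : ∀ᶠ t in nhdsWithin a {a}ᶜ, slope w a t < 0 :=
      hslope.eventually_lt_const hda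
    have hle : nhdsWithin a (Set.Iio a) ≤ nhdsWithin a {a}ᶜ :=
      nhdsWithin_mono a (fun x hx => ne_of_lt hx)
    have hev' : ∀ᶠ t in nhdsWithin a (Set.Iio a), slope w a t < 0 := hle hev
    have hmem : Set.Ioo s a ∈ nhdsWithin a (Set.Iio a) :=
      Ioo_mem_nhdsLT_of_mem ⟨hsa, le_rfl⟩
    obtain ⟨t, htslope, htI⟩ :=
      (hev'.and (Filter.eventually_of_mem hmem (fun x hx => hx))).exists
    -- slope w a t < 0, t < a  ⇒  w t > w a = c
    rw [slope_def_field] at htslope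
    have hta : t - a < 0 := sub_neg.mpr htI.2
    have hwt : c < w t := by
      rcases div_neg_iff.mp htslope with ⟨h1, h2⟩ | ⟨h1, h2⟩
      · linarith
      · rw [haw] at h1; linarith
    exact absurd (hbelow t (le_of_lt htI.1) htI.2) (not_lt.mpr (le_of_lt hwt))
  -- Step B: u = 1/w has derivative ≥ ε on (-∞, t₀], forcing u negative far back.
  set ε := 1 - K ^ 2 / c ^ 2 with hε_def
  have hεpos : 0 < ε := by
    rw [hε_def]
    have : K ^ 2 / c ^ 2 < 1 := (div_lt_one (by positivity)).mpr hK2c2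
    linarith
  set u := fun t => (w t)⁻¹ with hu_def
  set f := fun t => u t - ε * t with hf_def
  have hf_mono : MonotoneOn f (Set.Iic t₀) := by
    apply monotoneOn_of_deriv_nonneg (convex_Iic t₀)
    · apply ContinuousOn.sub
      · apply ContinuousOn.inv₀ hw.continuous.continuousOn
        intro x hx
        exact ne_of_gt (lt_of_lt_of_le hcpos (stepA x hx))
      · exact (continuous_const.mul continuous_id).continuousOn
    · intro x hx
      rw [interior_Iic] at hx
      have hne : w x ≠ 0 := ne_of_gt (lt_of_lt_of_le hcpos (stepA x (le_of_lt hx)))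
      exact ((((hw x).hasDerivAt.inv hne).sub ((hasDerivAt_id x).const_mul ε)).differentiableAt).differentiableWithinAt
    · intro x hx
      rw [interior_Iic] at hx
      have hwx : c ≤ w x := stepA x (le_of_lt hx)
      have hne : w x ≠ 0 := ne_of_gt (lt_of_lt_of_le hcpos hwx)
      have hd : HasDerivAt f (-(deriv w x) / w x ^ 2 - ε * 1) x :=
        ((hw x).hasDerivAt.inv hne).sub ((hasDerivAt_id x).const_mul ε)
      rw [hd.deriv]
      have hderiv : deriv w x = -(w x ^ 2 + k x) := by have := hric x; linarith
      rw [hderiv]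
      have hwx2 : 0 < w x ^ 2 := by positivity
      have hkx := hbound x
      have hdiv : K ^ 2 / w x ^ 2 ≤ K ^ 2 / c ^ 2 := by
        apply div_le_div_of_nonneg_left (by positivity) (by positivity)
        nlinarith
      have : -( -(w x ^ 2 + k x)) / w x ^ 2 = 1 + k x / w x ^ 2 := by
        field_simp
      rw [this, hε_def]
      have h1 : -K ^ 2 / w x ^ 2 ≤ k x / w x ^ 2 := by gcongr
      have h2 : -(K ^ 2 / w x ^ 2) ≤ k x / w x ^ 2 := by rwa [← neg_div]
      linarith
  -- positivity of u on (-∞, t₀]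
  have hut : ∀ t ≤ t₀, 0 < u t := fun t ht => inv_pos.mpr (hcpos.trans_le (stepA t ht))
  set T := t₀ - (u t₀ + 1) / ε with hT_def
  have hq : 0 < (u t₀ + 1) / ε := div_pos (by linarith [hut t₀ le_rfl]) hεpos
  have hT : T ≤ t₀ := by rw [hT_def]; linarith
  have hmono := hf_mono (Set.mem_Iic.mpr hT) (Set.mem_Iic.mpr le_rfl) hT
  have hcancel : ε * (t₀ - T) = u t₀ + 1 := by
    rw [hT_def]; field_simp; ring
  have hfT : f T = u T - ε * T := rfl
  have hft₀ : f t₀ = u t₀ - ε * t₀ := rfl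
  have huT : u T ≤ -1 := by
    have : u T - ε * T ≤ u t₀ - ε * t₀ := hmono
    nlinarith [hcancel]
  linarith [hut T hT]

/-- Riccati comparison: if `k ≥ -K²` and `w` is a global `C¹` solution of
`w' + w² + k = 0`, then `|w| ≤ K`. -/
theorem stmt_2 (k : ℝ → ℝ) (hk : Continuous k) (K : ℝ) (hK : 0 < K)
    (hbound : ∀ t, -K ^ 2 ≤ k t)
    (w : ℝ → ℝ) (hw : ContDiff ℝ 1 w)
    (hric : ∀ t, deriv w t + w t ^ 2 + k t = 0) :
    ∀ t, |w t| ≤ K := by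
  have hwd : Differentiable ℝ w := hw.differentiable one_ne_zero
  intro t
  rw [abs_le]
  constructor
  · by_contra hlt
    push_neg at hlt
    -- w t < -K : reflect time and negate
    set w₂ := fun s => -w (2 * t - s) with hw₂_def
    set k₂ := fun s => k (2 * t - s) with hk₂_def
    have hinner : Differentiable ℝ fun s : ℝ => 2 * t - s :=
      (differentiable_const _).sub differentiable_id
    have hw₂d : Differentiable ℝ w₂ := (hwd.comp hinner).neg
    have hderiv₂ : ∀ s, HasDerivAt w₂ (deriv w (2 * t - s)) s := by
      intro s
      have h1 : HasDerivAt (fun s : ℝ => 2 * t - s) (-1) s :=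
        (hasDerivAt_id s).const_sub (2 * t)
      have h2 : HasDerivAt (fun s => w (2 * t - s)) (deriv w (2 * t - s) * (-1)) s :=
        (hwd (2 * t - s)).hasDerivAt.comp s h1
      have h3 := h2.neg
      have h5 : -(deriv w (2 * t - s) * (-1)) = deriv w (2 * t - s) := by ring
      rw [h5] at h3
      exact h3
    have hric₂ : ∀ s, deriv w₂ s + w₂ s ^ 2 + k₂ s = 0 := by
      intro s
      have h4 := (hderiv₂ s).deriv
      have h5 := hric (2 * t - s)
      rw [h4, hw₂_def, hk₂_def]
      simp only [neg_sq]
      exact h5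
    have hb₂ : ∀ s, -K ^ 2 ≤ k₂ s := fun s => hbound _
    have h2t : (2 : ℝ) * t - t = t := by ring
    have hKw₂ : K < w₂ t := by
      rw [hw₂_def]; simp only [h2t]; linarith
    exact absurd (riccati_aux K hK k₂ hb₂ w₂ hw₂d hric₂ t hKw₂) (fun h => h)
  · by_contra hlt
    push_neg at hlt
    exact riccati_aux K hK k hbound w hwd hric t hlt
end

section
/- Let r_s, r_u, V, κ₀ : ℝ → ℝ be differentiable functions each satisfying the Riccati equation r² + V r + κ₀ − r' = 0. Then w := −(r_s + r_u)/2 satisfies w² − V w + κ₀ + w' = −(1/4)(r_s − r_u)². In particular, if r_s(t) ≠ r_u(t) for all t, then w² − V w + κ₀ + w' < 0 everywhere. -/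
/-- If `r_s`, `r_u` both solve `r² + V r + κ₀ - r' = 0`, then `w = -(r_s + r_u)/2`
satisfies `w² - V w + κ₀ + w' = -(1/4)(r_s - r_u)²`; in particular, if
`r_s ≠ r_u` everywhere, the gauged curvature `κ_w` is everywhere negative. -/
theorem stmt_15 (rs ru V κ₀ : ℝ → ℝ)
    (hrs : Differentiable ℝ rs) (hru : Differentiable ℝ ru)
    (heqs : ∀ t, rs t ^ 2 + V t * rs t + κ₀ t - deriv rs t = 0)
    (hequ : ∀ t, ru t ^ 2 + V t * ru t + κ₀ t - deriv ru t = 0) :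
    (∀ t, (fun s => -(rs s + ru s) / 2) t ^ 2 - V t * (-(rs t + ru t) / 2) + κ₀ t
        + deriv (fun s => -(rs s + ru s) / 2) t
      = -(1 / 4) * (rs t - ru t) ^ 2) ∧
    ((∀ t, rs t ≠ ru t) →
      ∀ t, (-(rs t + ru t) / 2) ^ 2 - V t * (-(rs t + ru t) / 2) + κ₀ t
        + deriv (fun s => -(rs s + ru s) / 2) t < 0) := by
  have hd : ∀ t, deriv (fun s => -(rs s + ru s) / 2) t
      = -(deriv rs t + deriv ru t) / 2 := by
    intro t
    have : (fun s => -(rs s + ru s) / 2) = fun s => (-(1:ℝ)/2) * rs s + (-(1:ℝ)/2) * ru s := by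
      funext s; ring
    rw [this, deriv_fun_add ((hrs t).const_mul _)
      ((hru t).const_mul _), deriv_const_mul _ (hrs t),
      deriv_const_mul _ (hru t)]
    ring
  have key : ∀ t, (fun s => -(rs s + ru s) / 2) t ^ 2 - V t * (-(rs t + ru t) / 2) + κ₀ t
        + deriv (fun s => -(rs s + ru s) / 2) t
      = -(1 / 4) * (rs t - ru t) ^ 2 := by
    intro t
    have h1 := heqs t
    have h2 := hequ t
    simp only [hd t]
    nlinarith [h1, h2]
  refine ⟨key, fun hne t => ?_⟩
  have := key t
  simp only at this
  rw [this]
  have : rs t - ru t ≠ 0 := sub_ne_zero.mpr (hne t)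
  nlinarith [pow_pos (abs_pos.mpr this) 2, sq_abs (rs t - ru t)]
end

section
/- Let r : ℝ → ℝ be continuous and differentiable, V : ℝ → ℝ continuous, and suppose r satisfies the Riccati equation r' = r² + V r + κ for a continuous function κ. If ∫₀^T F(r) dτ with F(r) = r' is rewritten via integration by parts against a density with divergence V (i.e., ∫ r' + r V = boundary terms that vanish on a closed orbit of period T), then ∫₀^T (r² + 2Vr + V²) dτ = −∫₀^T (κ − V²) dτ, i.e., ∫₀^T (r + V)² dτ = −∫₀^T (κ − V²) dτ. In particular ∫₀^T κ dτ ≤ ∫₀^T V² dτ along any period-T closed orbit, with equality iff r = −V on [0,T]. -/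
open intervalIntegral MeasureTheory

/-- Closed-orbit Hopf inequality: if `r' = r² + V r + κ` on `[0,T]` with
`r 0 = r T`, then `∫₀ᵀ κ ≤ (1/4)∫₀ᵀ V²`, with equality iff `r = -V/2` on `[0,T]`. -/
theorem stmt_17 (T : ℝ) (hT : 0 < T) (r V κ : ℝ → ℝ)
    (hr : ContDiff ℝ 1 r) (hV : Continuous V) (hκ : Continuous κ)
    (hric : ∀ t, deriv r t = r t ^ 2 + V t * r t + κ t)
    (hper : r 0 = r T) :
    (∫ τ in (0:ℝ)..T, κ τ) ≤ (1 / 4) * ∫ τ in (0:ℝ)..T, (V τ) ^ 2 ∧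
    ((∫ τ in (0:ℝ)..T, κ τ) = (1 / 4) * (∫ τ in (0:ℝ)..T, (V τ) ^ 2) ↔
      ∀ t ∈ Set.Icc 0 T, r t = -V t / 2) := by
  have hrc : Continuous r := hr.continuous
  have hdc : Continuous (deriv r) := hr.continuous_deriv le_rfl
  set f : ℝ → ℝ := fun t => (r t + V t / 2) ^ 2 with hf
  have hfc : Continuous f := by fun_prop
  have hfnn : ∀ t, 0 ≤ f t := fun t => sq_nonneg _
  have hkint : IntervalIntegrable κ volume 0 T := hκ.intervalIntegrable _ _
  have hV2int : IntervalIntegrable (fun t => V t ^ 2 / 4) volume 0 T :=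
    ((hV.pow 2).div_const 4).intervalIntegrable _ _
  have hfint : IntervalIntegrable f volume 0 T := hfc.intervalIntegrable _ _
  have hftc : (∫ τ in (0:ℝ)..T, deriv r τ) = 0 := by
    rw [intervalIntegral.integral_deriv_eq_sub
        (fun t _ => hr.differentiable one_ne_zero t) (hdc.intervalIntegrable _ _), hper, sub_self]
  -- key identity: ∫ f = (1/4)∫ V² - ∫ κ
  have hkey : (∫ τ in (0:ℝ)..T, f τ)
      = (1 / 4) * (∫ τ in (0:ℝ)..T, (V τ) ^ 2) - ∫ τ in (0:ℝ)..T, κ τ := by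
    have h1 : ∀ t, f t = deriv r t - (κ t - V t ^ 2 / 4) := by
      intro t; rw [hric t]; simp only [hf]; ring
    rw [intervalIntegral.integral_congr (fun t _ => h1 t),
      intervalIntegral.integral_sub (hdc.intervalIntegrable _ _) (hkint.sub hV2int),
      intervalIntegral.integral_sub hkint hV2int, hftc,
      intervalIntegral.integral_div]
    ring
  have hfpos : 0 ≤ ∫ τ in (0:ℝ)..T, f τ :=
    intervalIntegral.integral_nonneg hT.le (fun t _ => hfnn t)
  constructor
  · linarith
  constructor
  · intro heq
    have hzero : (∫ τ in (0:ℝ)..T, f τ) = 0 := by rw [hkey, heq]; ring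
    have hae : f =ᵐ[volume.restrict (Set.Ioc 0 T)] 0 := by
      have := (intervalIntegral.integral_eq_zero_iff_of_le_of_nonneg_ae hT.le
        (Filter.Eventually.of_forall hfnn) hfint).mp hzero
      exact this
    have hae' : f =ᵐ[volume.restrict (Set.Icc 0 T)] 0 := by
      rwa [Measure.restrict_congr_set MeasureTheory.Ioc_ae_eq_Icc] at hae
    have heqon : Set.EqOn f 0 (Set.Icc 0 T) := by
      refine Measure.eqOn_of_ae_eq hae' hfc.continuousOn continuousOn_const ?_
      rw [interior_Icc, closure_Ioo hT.ne]
    intro t ht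
    have := heqon ht
    simp only [hf, Pi.zero_apply] at this
    have h2 : r t + V t / 2 = 0 := by
      have := sq_eq_zero_iff.mp this
      exact this
    linarith
  · intro h
    have h1 : ∀ t ∈ Set.uIcc (0:ℝ) T, f t = 0 := by
      intro t ht
      rw [Set.uIcc_of_le hT.le] at ht
      have := h t ht
      simp only [hf, this]; ring
    have hzero : (∫ τ in (0:ℝ)..T, f τ) = 0 := by
      rw [intervalIntegral.integral_congr h1]; simp
    linarith
end
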